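/- Let x1,…,xn ∈ ℝ^d with ‖xi‖₂ ≤ 1, let P_{-1} be the orthogonal projection onto span{x2,…,xn} and P1 = P - P_{-1} where P projects onto span{x1,…,xn}. If ‖P_{-1}x̄1‖₂ ≤ 2√n·ι with x̄1 = x1/‖x1‖₂ and 4nι² ≤ 1, then the rank-one matrix H1 = (P1 X)(P1 X)ᵀ, where X = (x1,…,xn), has exactly one nonzero eigenvalue, equal to ‖P1 x1‖₂², which lies in [λ1(1 - 4nι²), λ1] where λ1 = ‖x1‖₂²; its eigenspace is the (one-dimensional) column space of P1. -/

import Mathlib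

/-- The rank-one block `H₁ = (P₁X)(P₁X)ᵀ`: with `P₋` the projection onto
`span{x₁,…,xₙ}`, `P` the projection onto `span{x₀,…,xₙ}`, `P₁ = P - P₋`, if
`‖P₋x̄₀‖ ≤ 2√(n+1) ι` and `4(n+1)ι² ≤ 1`, then `H₁ v = ∑ᵢ ⟪P₁xᵢ, v⟫ P₁xᵢ` has
exactly one nonzero eigenvalue `‖P₁x₀‖² ∈ [λ₀(1-4(n+1)ι²), λ₀]`, with
eigenspace the span of `P₁x₀` (the column space of `P₁`).
(Here there are `n+1` data points, indexed from `0`.) -/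
theorem stmt_6 (d n : ℕ) (ι : ℝ) (hι : 0 ≤ ι)
    (x : Fin (n + 1) → EuclideanSpace ℝ (Fin d))
    (hxnorm : ∀ i, ‖x i‖ ≤ 1) (hx0 : x 0 ≠ 0)
    (lam0 : ℝ) (hlam0 : lam0 = ‖x 0‖ ^ 2)
    (Km K : Submodule ℝ (EuclideanSpace ℝ (Fin d)))
    (hKm : Km = Submodule.span ℝ (x '' {j | j ≠ 0}))
    (hK : K = Submodule.span ℝ (Set.range x))
    (Pm P1 : EuclideanSpace ℝ (Fin d) → EuclideanSpace ℝ (Fin d))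
    (hPm : ∀ v, Pm v = (Submodule.orthogonalProjectionOnto Km v : EuclideanSpace ℝ (Fin d)))
    (hP1 : ∀ v, P1 v =
      (Submodule.orthogonalProjectionOnto K v : EuclideanSpace ℝ (Fin d)) - Pm v)
    (hproj : ‖Pm (‖x 0‖⁻¹ • x 0)‖ ≤ 2 * Real.sqrt (n + 1) * ι)
    (hι2 : 4 * (n + 1) * ι ^ 2 ≤ 1)
    (H1 : EuclideanSpace ℝ (Fin d) → EuclideanSpace ℝ (Fin d))
    (hH1 : ∀ v, H1 v = ∑ i, (inner ℝ (P1 (x i)) v : ℝ) • P1 (x i)) :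
    (lam0 * (1 - 4 * (n + 1) * ι ^ 2) ≤ ‖P1 (x 0)‖ ^ 2 ∧
      ‖P1 (x 0)‖ ^ 2 ≤ lam0) ∧
    (∀ (γ : ℝ) (v : EuclideanSpace ℝ (Fin d)), v ≠ 0 → H1 v = γ • v →
      γ = 0 ∨ (γ = ‖P1 (x 0)‖ ^ 2 ∧ v ∈ Submodule.span ℝ {P1 (x 0)})) ∧
    (∀ v ∈ Submodule.span ℝ ({P1 (x 0)} : Set (EuclideanSpace ℝ (Fin d))),
      H1 v = ‖P1 (x 0)‖ ^ 2 • v) := by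
  have hx0n : ‖x 0‖ ≠ 0 := norm_ne_zero_iff.mpr hx0
  have hmemK : ∀ i, x i ∈ K := fun i => hK ▸ Submodule.subset_span ⟨i, rfl⟩
  have hP1zero : ∀ j, j ≠ 0 → P1 (x j) = 0 := by
    intro j hj
    have h1 : x j ∈ Km := hKm ▸ Submodule.subset_span ⟨j, hj, rfl⟩
    rw [hP1, hPm, ← Submodule.starProjection_apply, Submodule.starProjection_eq_self_iff.mpr (hmemK j),
      ← Submodule.starProjection_apply, Submodule.starProjection_eq_self_iff.mpr h1, sub_self]
  have hH1' : ∀ v, H1 v = (inner ℝ (P1 (x 0)) v : ℝ) • P1 (x 0) := by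
    intro v
    rw [hH1]
    exact Finset.sum_eq_single 0 (fun i _ hi => by rw [hP1zero i hi]; simp)
      (by simp)
  have hP1x0 : P1 (x 0) = x 0 - Pm (x 0) := by
    rw [hP1, ← Submodule.starProjection_apply, Submodule.starProjection_eq_self_iff.mpr (hmemK 0)]
  have hPmsmul : Pm (x 0) = ‖x 0‖ • Pm (‖x 0‖⁻¹ • x 0) := by
    have hx : (‖x 0‖ : ℝ) • (‖x 0‖⁻¹ • x 0) = x 0 := by
      rw [smul_smul, mul_inv_cancel₀ hx0n, one_smul]
    conv_lhs => rw [← hx]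
    rw [hPm, hPm, map_smul, Submodule.coe_smul]
  have hPmnorm : ‖Pm (x 0)‖ ≤ ‖x 0‖ * (2 * Real.sqrt (n + 1) * ι) := by
    rw [hPmsmul, norm_smul, Real.norm_eq_abs, abs_of_nonneg (norm_nonneg _)]
    exact mul_le_mul_of_nonneg_left hproj (norm_nonneg _)
  have hPmmem : Pm (x 0) ∈ Km := hPm (x 0) ▸ (Submodule.orthogonalProjectionOnto Km (x 0)).2
  have h2 : x 0 - Pm (x 0) ∈ Kmᗮ := by
    rw [hPm]; exact Submodule.sub_starProjection_mem_orthogonal (x 0)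
  have horth : (inner ℝ (Pm (x 0)) (x 0 - Pm (x 0)) : ℝ) = 0 :=
    (Submodule.mem_orthogonal Km _).mp h2 _ hPmmem
  have hpyth : ‖P1 (x 0)‖ ^ 2 = ‖x 0‖ ^ 2 - ‖Pm (x 0)‖ ^ 2 := by
    have h3 := norm_add_sq_real (Pm (x 0)) (x 0 - Pm (x 0))
    rw [horth, add_sub_cancel] at h3
    rw [hP1x0]; linarith
  have hsqrt : (Real.sqrt (n + 1)) ^ 2 = (n + 1 : ℝ) := by
    rw [Real.sq_sqrt]; positivity
  have hPmsq : ‖Pm (x 0)‖ ^ 2 ≤ lam0 * (4 * (n + 1) * ι ^ 2) := by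
    have := mul_self_le_mul_self (norm_nonneg (Pm (x 0))) hPmnorm
    rw [hlam0]
    nlinarith [sq_nonneg ι, sq_nonneg (‖x 0‖)]
  refine ⟨⟨by nlinarith, by nlinarith [sq_nonneg ‖Pm (x 0)‖]⟩, ?_, ?_⟩
  · intro γ v hv heig
    rw [hH1'] at heig
    by_cases hγ : γ = 0
    · exact Or.inl hγ
    · right
      have hveq : v = (γ⁻¹ * (inner ℝ (P1 (x 0)) v : ℝ)) • P1 (x 0) := by
        rw [mul_smul, heig, smul_smul, inv_mul_cancel₀ hγ, one_smul]
      refine ⟨?_, Submodule.mem_span_singleton.mpr ⟨_, hveq.symm⟩⟩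
      set c := γ⁻¹ * (inner ℝ (P1 (x 0)) v : ℝ) with hc
      have hP1ne : P1 (x 0) ≠ 0 := by
        intro h; apply hv; rw [hveq, h, smul_zero]
      have hcne : c ≠ 0 := by
        intro h; apply hv; rw [hveq, h, zero_smul]
      have hin : (inner ℝ (P1 (x 0)) v : ℝ) = c * ‖P1 (x 0)‖ ^ 2 := by
        rw [hveq, real_inner_smul_right, real_inner_self_eq_norm_sq]
      have heq : (c * ‖P1 (x 0)‖ ^ 2) • P1 (x 0) = (γ * c) • P1 (x 0) := by
        rw [← hin, heig, hveq, smul_smul]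
      have h4 := smul_left_injective ℝ hP1ne heq
      have h5 : c * ‖P1 (x 0)‖ ^ 2 = c * γ := by rw [h4, mul_comm]
      exact (mul_left_cancel₀ hcne h5).symm
  · intro v hvmem
    obtain ⟨c, rfl⟩ := Submodule.mem_span_singleton.mp hvmem
    rw [hH1', real_inner_smul_right, real_inner_self_eq_norm_sq, smul_smul,
      mul_comm]
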